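/- For the biweight loss γ(y;θ) = min{(y−θ)², K²} with K > 0, for every 1 ≤ t ≤ n the function θ ↦ Q_t(θ) is piecewise quadratic on at most (2t+1)(2t−1) intervals; in particular the number of intervals needed is O(t²). -/

import Mathlib

open MeasureTheory Finset

/-- Cost of the segment consisting of data points `y_{s+1}, …, y_t`:
the infimum over the location parameter `θ` of the summed loss. -/
noncomputable def segCost (γ : ℝ → ℝ → ℝ) (y : ℕ → ℝ) (s t : ℕ) : ℝ :=
  ⨅ θ : ℝ, ∑ i ∈ Finset.Ioc s t, γ (y i) θ

/-- `τ : ℕ → ℕ` encodes an element of `S_t`: changepoints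
`0 = τ 0 < τ 1 < ⋯ < τ k < t` (with `k = 0` meaning no changepoints). -/
def LastSeg (t k : ℕ) (τ : ℕ → ℕ) : Prop :=
  τ 0 = 0 ∧ τ k < t ∧ ∀ i < k, τ i < τ (i + 1)

/-- `Q_t(θ)`: the minimum penalised cost of segmenting `y_{1:t}` conditional on the
most recent segment having location parameter `θ`. -/
noncomputable def condCost (γ : ℝ → ℝ → ℝ) (y : ℕ → ℝ) (β : ℝ) (t : ℕ) (θ : ℝ) : ℝ :=
  sInf {c : ℝ | ∃ (k : ℕ) (τ : ℕ → ℕ), LastSeg t k τ ∧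
    c = (∑ i ∈ Finset.range k, (segCost γ y (τ i) (τ (i + 1)) + β)) +
        (∑ j ∈ Finset.Ioc (τ k) t, γ (y j) θ) + β}

/-- `f` is piecewise quadratic on (at most) `N` intervals: there are points
`−∞ = a_0 < a_1 < ⋯ < a_{N−1} < a_N = ∞` such that on each `(a_{j}, a_{j+1}]`, `f`
agrees with a polynomial of degree at most `2`. -/
def IsPiecewiseQuad (f : ℝ → ℝ) (N : ℕ) : Prop :=
  ∃ a : ℕ → EReal, a 0 = ⊥ ∧ a N = ⊤ ∧ (∀ j < N, a j < a (j + 1)) ∧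
    ∀ j < N, ∃ c₀ c₁ c₂ : ℝ, ∀ x : ℝ,
      a j < (x : EReal) → (x : EReal) ≤ a (j + 1) → f x = c₀ + c₁ * x + c₂ * x ^ 2

/-- weak piecewise-quadratic on `(u, v]`. -/

def PWOn (f : ℝ → ℝ) (u v : EReal) (N : ℕ) : Prop :=
  ∃ a : ℕ → EReal, a 0 = u ∧ a N = v ∧ (∀ j < N, a j ≤ a (j + 1)) ∧
    ∀ j < N, ∃ c₀ c₁ c₂ : ℝ, ∀ x : ℝ,
      a j < (x : EReal) → (x : EReal) ≤ a (j + 1) → f x = c₀ + c₁ * x + c₂ * x ^ 2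

lemma chain_mono {a : ℕ → EReal} {N : ℕ} (h : ∀ j < N, a j ≤ a (j + 1)) :
    ∀ i j, i ≤ j → j ≤ N → a i ≤ a j := by
  intro i j hij hjN
  induction j with
  | zero => simp_all
  | succ m ih =>
    rcases Nat.lt_or_ge i (m+1) with hi | hi
    · exact le_trans (ih (Nat.lt_succ_iff.mp hi) (le_trans (Nat.le_succ m) hjN))
        (h m (Nat.lt_of_lt_of_le (Nat.lt_succ_self m) hjN))
    · have : i = m + 1 := le_antisymm hij hi
      simp [this]

lemma PWOn.congr {f g : ℝ → ℝ} {u v : EReal} {N : ℕ}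
    (hfg : ∀ x : ℝ, u < (x : EReal) → (x : EReal) ≤ v → f x = g x)
    (h : PWOn g u v N) : PWOn f u v N := by
  obtain ⟨a, h0, hN, hm, hq⟩ := h
  refine ⟨a, h0, hN, hm, fun j hj => ?_⟩
  obtain ⟨c₀, c₁, c₂, hc⟩ := hq j hj
  refine ⟨c₀, c₁, c₂, fun x hx1 hx2 => ?_⟩
  have hu : u < (x : EReal) := lt_of_le_of_lt (h0 ▸ chain_mono hm 0 j (Nat.zero_le _) hj.le) hx1
  have hv : (x : EReal) ≤ v := le_trans hx2 (hN ▸ chain_mono hm (j+1) N hj (le_refl _))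
  rw [hfg x hu hv]; exact hc x hx1 hx2

lemma PWOn.pad {f : ℝ → ℝ} {u v : EReal} {N M : ℕ} (h : PWOn f u v N) (hNM : N ≤ M) :
    PWOn f u v M := by
  obtain ⟨a, h0, hN, hm, hq⟩ := h
  set e : ℕ → EReal := fun j => if j ≤ N then a j else v with he
  have key : ∀ j, N ≤ j → e j = v := by
    intro j hj
    by_cases h : j ≤ N
    · have : j = N := le_antisymm h hj; simp [he, this, hN]
    · simp [he, h]
  refine ⟨e, by simp [he, h0], key M hNM, ?_, ?_⟩
  · intro j hj
    by_cases h1 : j + 1 ≤ N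
    · show (if j ≤ N then a j else v) ≤ (if j + 1 ≤ N then a (j+1) else v)
      simp [h1, le_trans (Nat.le_succ j) h1, hm j (by omega)]
    · rw [key (j+1) (by omega)]
      by_cases h2 : j ≤ N
      · show (if j ≤ N then a j else v) ≤ v
        simp only [h2, if_true]
        exact hN ▸ chain_mono hm j N h2 le_rfl
      · rw [key j (by omega)]
  · intro j hj
    by_cases h1 : j + 1 ≤ N
    · obtain ⟨c₀, c₁, c₂, hc⟩ := hq j (by omega)
      refine ⟨c₀, c₁, c₂, fun x hx1 hx2 => ?_⟩
      have e1 : e j = a j := by simp [he, le_trans (Nat.le_succ j) h1]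
      have e2 : e (j+1) = a (j+1) := by simp [he, h1]
      rw [e1] at hx1; rw [e2] at hx2
      exact hc x hx1 hx2
    · refine ⟨0, 0, 0, fun x hx1 hx2 => ?_⟩
      rw [key (j+1) (by omega)] at hx2
      have : v < (x : EReal) := by
        rcases le_or_gt j N with h2 | h2
        · have : j = N := by omega
          rw [show e j = v from key j (by omega)] at hx1; exact hx1
        · rw [key j (by omega)] at hx1; exact hx1
      exact absurd (lt_of_lt_of_le this hx2) (lt_irrefl _)

lemma PWOn.glue {f : ℝ → ℝ} {u w v : EReal} {N M : ℕ}
    (h1 : PWOn f u w N) (h2 : PWOn f w v M) : PWOn f u v (N + M) := by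
  obtain ⟨a, a0, aN, am, aq⟩ := h1
  obtain ⟨b, b0, bM, bm, bq⟩ := h2
  set e : ℕ → EReal := fun j => if j ≤ N then a j else b (j - N) with he
  have key : ∀ j, N ≤ j → e j = b (j - N) := by
    intro j hj
    by_cases h : j ≤ N
    · have : j = N := le_antisymm h hj
      simp [he, this, aN, b0]
    · simp [he, h]
  refine ⟨e, by simp [he, a0], ?_, ?_, ?_⟩
  · rw [key _ (Nat.le_add_right N M)]; simp [bM]
  · intro j hj
    by_cases h : j + 1 ≤ N
    · show (if j ≤ N then a j else _) ≤ (if j + 1 ≤ N then a (j+1) else _)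
      simp [h, le_trans (Nat.le_succ j) h, am j (by omega)]
    · rcases Nat.lt_or_ge j N with h' | h'
      · have e1 : e j = a j := by simp [he, le_of_lt h']
        rw [e1, key (j+1) (by omega)]
        have : j + 1 - N = 0 := by omega
        rw [this, b0, ← aN]
        exact chain_mono am j N (le_of_lt h') le_rfl
      · rw [key j h', key (j+1) (by omega)]
        have : j + 1 - N = (j - N) + 1 := by omega
        rw [this]
        exact bm (j - N) (by omega)
  · intro j hj
    by_cases h : j + 1 ≤ N
    · obtain ⟨c₀, c₁, c₂, hc⟩ := aq j (by omega)
      refine ⟨c₀, c₁, c₂, fun x hx1 hx2 => ?_⟩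
      have e1 : e j = a j := by simp [he, le_trans (Nat.le_succ j) h]
      have e2 : e (j+1) = a (j+1) := by simp [he, h]
      rw [e1] at hx1; rw [e2] at hx2
      exact hc x hx1 hx2
    · obtain ⟨c₀, c₁, c₂, hc⟩ := bq (j - N) (by omega)
      refine ⟨c₀, c₁, c₂, fun x hx1 hx2 => ?_⟩
      rw [key j (by omega)] at hx1
      rw [key (j+1) (by omega), show j + 1 - N = (j - N) + 1 by omega] at hx2
      exact hc x hx1 hx2

lemma PWOn.single {f : ℝ → ℝ} {u v : EReal} (huv : u ≤ v) (c₀ c₁ c₂ : ℝ)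
    (h : ∀ x : ℝ, u < (x : EReal) → (x : EReal) ≤ v → f x = c₀ + c₁ * x + c₂ * x ^ 2) :
    PWOn f u v 1 := by
  refine ⟨fun j => if j = 0 then u else v, by simp, by simp, ?_, ?_⟩
  · intro j hj; interval_cases j; simpa
  · intro j hj; interval_cases j
    exact ⟨c₀, c₁, c₂, fun x hx1 hx2 => h x (by simpa using hx1) (by simpa using hx2)⟩

lemma strictPad {f : ℝ → ℝ} {M N : ℕ} (hMN : M ≤ N) (b : ℕ → EReal)
    (b0 : b 0 = ⊥) (bM : b M = ⊤) (bs : ∀ j < M, b j < b (j + 1))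
    (bq : ∀ j < M, ∃ c₀ c₁ c₂ : ℝ, ∀ x : ℝ,
      b j < (x : EReal) → (x : EReal) ≤ b (j + 1) → f x = c₀ + c₁ * x + c₂ * x ^ 2) :
    IsPiecewiseQuad f N := by
  have hM1 : 1 ≤ M := by
    rcases Nat.eq_zero_or_pos M with h | h
    · subst h; rw [b0] at bM; exact absurd bM (by simp)
    · exact h
  set D := N - M with hD
  rcases Nat.eq_zero_or_pos D with hD0 | hD0
  · have : M = N := by omega
    exact ⟨b, b0, this ▸ bM, this ▸ bs, this ▸ bq⟩
  · have hb1bot : (⊥ : EReal) < b 1 := b0 ▸ bs 0 hM1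
    set x : ℝ := if b 1 = ⊤ then 0 else (b 1).toReal - 1 with hx
    have hxlt : (x : EReal) < b 1 := by
      by_cases h : b 1 = ⊤
      · rw [h]; simp [hx, h]
      · have hne : b 1 ≠ ⊥ := ne_of_gt hb1bot
        have : ((b 1).toReal : EReal) = b 1 := EReal.coe_toReal h hne
        rw [hx, if_neg h, ← this]
        exact_mod_cast sub_one_lt _
    set c : ℕ → EReal := fun j =>
      if j = 0 then ⊥ else if j ≤ D then ((x - D + j : ℝ) : EReal) else b (j - D) with hc
    have hc0 : c 0 = ⊥ := by simp [hc]
    have hcD : ∀ j, D < j → c j = b (j - D) := by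
      intro j hj
      simp only [hc]
      rw [if_neg (by omega : ¬ j = 0), if_neg (by omega : ¬ j ≤ D)]
    have hcmid : ∀ j, 1 ≤ j → j ≤ D → c j = ((x - D + j : ℝ) : EReal) := by
      intro j h1 h2
      simp only [hc]
      rw [if_neg (by omega : ¬ j = 0), if_pos h2]
    have hcleb1 : ∀ j, j ≤ D + 1 → c j ≤ b 1 := by
      intro j hj
      rcases Nat.eq_zero_or_pos j with h | h
      · subst h; rw [hc0]; exact bot_le
      · rcases Nat.lt_or_ge D j with h2 | h2
        · have : j = D + 1 := by omega
          rw [hcD j h2, this]; simp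
        · rw [hcmid j h h2]
          refine le_trans ?_ hxlt.le
          have : x - (D:ℝ) + j ≤ x := by
            have : (j:ℝ) ≤ (D:ℝ) := by exact_mod_cast h2
            linarith
          exact_mod_cast this
    refine ⟨c, hc0, ?_, ?_, ?_⟩
    · rw [hcD N (by omega), show N - D = M by omega, bM]
    · intro j hj
      rcases Nat.eq_zero_or_pos j with h | h
      · subst h
        rw [hc0, hcmid 1 le_rfl hD0]
        exact EReal.bot_lt_coe _
      · rcases Nat.lt_or_ge j D with h2 | h2
        · rw [hcmid j h h2.le, hcmid (j+1) (by omega) h2]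
          have : x - (D:ℝ) + j < x - D + (j+1:ℕ) := by push_cast; linarith
          exact_mod_cast this
        · rcases Nat.eq_or_lt_of_le h2 with h3 | h3
          · rw [hcmid j h (le_of_eq h3.symm), hcD (j+1) (by omega),
              show j + 1 - D = 1 by omega]
            have e0 : x - (D:ℝ) + (j:ℝ) = x := by rw [← h3]; ring
            have e : ((x - (D:ℝ) + j : ℝ) : EReal) = (x : EReal) := congrArg Real.toEReal e0
            rw [e]; exact hxlt
          · rw [hcD j h3, hcD (j+1) (by omega), show j + 1 - D = (j - D) + 1 by omega]
            exact bs (j - D) (by omega)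
    · intro j hj
      rcases Nat.lt_or_ge j (D + 1) with h2 | h2
      · obtain ⟨c₀, c₁, c₂, hq⟩ := bq 0 hM1
        refine ⟨c₀, c₁, c₂, fun z hz1 hz2 => ?_⟩
        refine hq z (by rw [b0]; exact EReal.bot_lt_coe _) ?_
        exact le_trans hz2 (hcleb1 (j+1) (by omega))
      · obtain ⟨c₀, c₁, c₂, hq⟩ := bq (j - D) (by omega)
        refine ⟨c₀, c₁, c₂, fun z hz1 hz2 => ?_⟩
        rw [hcD j (by omega)] at hz1
        rw [hcD (j+1) (by omega), show j + 1 - D = (j - D) + 1 by omega] at hz2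
        exact hq z hz1 hz2

lemma PWOn.isPiecewiseQuad {f : ℝ → ℝ} {N' N : ℕ} (h : PWOn f ⊥ ⊤ N') (hN' : N' ≤ N) :
    IsPiecewiseQuad f N := by
  classical
  obtain ⟨a, a0, aN, am, aq⟩ := h
  set T : Finset EReal := (Finset.range (N' + 1)).image a with hT
  set L : List EReal := T.sort (· ≤ ·) with hL
  have hsorted : L.Pairwise (· ≤ ·) := Finset.pairwise_sort _ _
  have hnodup : L.Nodup := Finset.sort_nodup _ _
  have hmemL : ∀ z, z ∈ L ↔ ∃ j ≤ N', a j = z := by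
    intro z
    rw [hL, Finset.mem_sort, hT, Finset.mem_image]
    constructor
    · rintro ⟨j, hj, hz⟩
      exact ⟨j, Nat.lt_succ_iff.mp (Finset.mem_range.mp hj), hz⟩
    · rintro ⟨j, hj, hz⟩
      exact ⟨j, Finset.mem_range.mpr (by omega), hz⟩
  set b : ℕ → EReal := fun i => L.getD i ⊤ with hb
  have hblen : ∀ i (h : i < L.length), b i = L.get ⟨i, h⟩ := by
    intro i h; simp only [hb]; simp [List.getD_eq_getElem?_getD, h]
  have hlen1 : 1 ≤ L.length := by
    have : ⊥ ∈ L := (hmemL ⊥).mpr ⟨0, Nat.zero_le _, a0⟩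
    exact List.length_pos_iff.mpr (List.ne_nil_of_mem this)
  set M := L.length - 1 with hM
  have hmono : ∀ i j, i ≤ j → j < L.length → b i ≤ b j := by
    intro i j hij hj
    rw [hblen i (by omega), hblen j hj]
    exact hsorted.rel_get_of_le (Fin.mk_le_mk.mpr hij)
  have hstrict : ∀ i j, i < j → j < L.length → b i < b j := by
    intro i j hij hj
    rw [hblen i (by omega), hblen j hj]
    exact (hsorted.sortedLE.sortedLT_of_nodup hnodup).strictMono_get (Fin.mk_lt_mk.mpr hij)
  have hbT : ∀ i, i < L.length → ∃ j ≤ N', a j = b i := by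
    intro i hi
    exact (hmemL (b i)).mp (by rw [hblen i hi]; exact List.get_mem L ⟨i, hi⟩)
  have haT : ∀ j, j ≤ N' → ∃ i, i < L.length ∧ b i = a j := by
    intro j hj
    have : a j ∈ L := (hmemL (a j)).mpr ⟨j, hj, rfl⟩
    obtain ⟨⟨i, hi⟩, h⟩ := List.get_of_mem this
    exact ⟨i, hi, by rw [hblen i hi]; exact h⟩
  have hb0 : b 0 = ⊥ := by
    obtain ⟨i, hi, hbi⟩ := haT 0 (Nat.zero_le _)
    rw [a0] at hbi
    exact le_antisymm (hbi ▸ hmono 0 i (Nat.zero_le _) hi) bot_le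
  have hbM : b M = ⊤ := by
    obtain ⟨i, hi, hbi⟩ := haT N' le_rfl
    rw [aN] at hbi
    exact le_antisymm le_top (hbi ▸ hmono i M (by omega) (by omega))
  have hMN : M ≤ N := by
    have h1 : L.length = T.card := Finset.length_sort _
    have h2 : T.card ≤ N' + 1 := by
      rw [hT]; exact Finset.card_image_le.trans (by simp)
    omega
  have main : ∀ i < M, ∃ j < N', a j = b i ∧ a (j + 1) = b (i + 1) := by
    intro i hi
    obtain ⟨j₀, hj₀, hj₀e⟩ := hbT i (by omega)
    set j := Nat.findGreatest (fun j => a j = b i) N' with hj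
    have hspec : a j = b i := Nat.findGreatest_spec (P := fun j => a j = b i) hj₀ hj₀e
    have hjle : j ≤ N' := Nat.findGreatest_le N'
    have hbii : b i < b (i + 1) := hstrict i (i+1) (Nat.lt_succ_self i) (by omega)
    have hjlt : j < N' := by
      rcases Nat.eq_or_lt_of_le hjle with h | h
      · exfalso
        rw [h, aN] at hspec
        have h5 : b (i+1) ≤ b i := by rw [← hspec]; exact le_top
        exact absurd (lt_of_lt_of_le hbii h5) (lt_irrefl _)
      · exact h
    have hmax : a (j + 1) ≠ b i :=
      Nat.findGreatest_is_greatest (Nat.lt_succ_self j) (by omega)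
    have h1 : b i < a (j + 1) :=
      lt_of_le_of_ne (hspec ▸ am j hjlt) (Ne.symm hmax)
    obtain ⟨m, hm, hme⟩ := haT (j+1) (by omega)
    have him : i < m := by
      by_contra h
      push_neg at h
      exact absurd (lt_of_lt_of_le (hme ▸ h1) (hmono m i h (by omega))) (lt_irrefl _)
    have h2 : b (i + 1) ≤ a (j + 1) := hme ▸ hmono (i+1) m him (by omega)
    obtain ⟨l, hl, hle⟩ := hbT (i+1) (by omega)
    have hjl : j < l := by
      by_contra h
      push_neg at h
      have h6 : a l ≤ a j := chain_mono am l j h hjle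
      rw [hle, hspec] at h6
      exact absurd (lt_of_lt_of_le hbii h6) (lt_irrefl _)
    have h3 : a (j + 1) ≤ b (i + 1) := hle ▸ chain_mono am (j+1) l hjl hl
    exact ⟨j, hjlt, hspec, le_antisymm h3 h2⟩
  refine strictPad hMN b hb0 hbM
    (fun i hiM => hstrict i (i+1) (Nat.lt_succ_self i) (by omega)) ?_
  intro i hiM
  obtain ⟨j, hj, h1, h2⟩ := main i hiM
  obtain ⟨c₀, c₁, c₂, hq⟩ := aq j hj
  exact ⟨c₀, c₁, c₂, fun z hz1 hz2 => hq z (h1 ▸ hz1) (h2 ▸ hz2)⟩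



-- helper lemmas for the envelope argument
lemma continuous_inf' {S : Finset ℕ} (hS : S.Nonempty) (q : ℕ → ℝ → ℝ)
    (hq : ∀ s, Continuous (q s)) : Continuous fun x => S.inf' hS fun s => q s x := by
  induction hS using Finset.Nonempty.cons_induction with
  | singleton a => simpa using hq a
  | cons a s ha hs ih =>
    have e : (fun x => (Finset.cons a s ha).inf' (Finset.cons_nonempty ha) fun s' => q s' x)
        = fun x => min (q a x) (s.inf' hs fun s' => q s' x) := by
      funext x; rw [Finset.inf'_cons]
    rw [e]; exact (hq a).min ih

lemma convexOn_sup' {S : Finset ℕ} (hS : S.Nonempty) (q : ℕ → ℝ → ℝ)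
    (hq : ∀ s ∈ S, ConvexOn ℝ Set.univ (q s)) :
    ConvexOn ℝ Set.univ fun x => S.sup' hS fun s => q s x := by
  induction hS using Finset.Nonempty.cons_induction with
  | singleton a => simpa using hq a (Finset.mem_singleton_self a)
  | cons a s ha hs ih =>
    have e : (fun x => (Finset.cons a s ha).sup' (Finset.cons_nonempty ha) fun s' => q s' x)
        = fun x => max (q a x) (s.sup' hs fun s' => q s' x) := by
      funext x; rw [Finset.sup'_cons]
    rw [e]
    exact (hq a (Finset.mem_cons_self a s)).sup
      (ih (fun s' hs' => hq s' (Finset.mem_cons_of_mem hs')))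

lemma sub_inf'_eq_sup' {S : Finset ℕ} (hS : S.Nonempty) (f : ℕ → ℝ) (z : ℝ) :
    z - S.inf' hS f = S.sup' hS fun s => z - f s := by
  induction hS using Finset.Nonempty.cons_induction with
  | singleton a => simp
  | cons a s ha hs ih =>
    rw [Finset.inf'_cons, Finset.sup'_cons, ← ih]
    rcases le_total (f a) (s.inf' hs f) with h | h <;>
      simp [min_def, max_def, h] <;> intro <;> linarith
    all_goals exact hs

lemma convexOn_quad (a b c : ℝ) (hc : 0 ≤ c) :
    ConvexOn ℝ Set.univ fun x : ℝ => a + b * x + c * x ^ 2 := by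
  have h1 : ConvexOn ℝ Set.univ fun x : ℝ => a + b * x := by
    refine ⟨convex_univ, ?_⟩
    intro x _ y _ p q hp hq hpq
    simp only [smul_eq_mul]
    have : a + b * (p * x + q * y) = p * (a + b * x) + q * (a + b * y) := by
      linear_combination -a * hpq
    exact le_of_eq this
  have h2 : ConvexOn ℝ Set.univ fun x : ℝ => c * x ^ 2 := by
    have h := (Even.convexOn_pow (even_two)).smul hc (𝕜 := ℝ)
    simpa [smul_eq_mul] using h
  have e : (fun x : ℝ => a + b * x + c * x ^ 2)
      = (fun x : ℝ => a + b * x) + fun x : ℝ => c * x ^ 2 := by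
    funext x; simp
  rw [e]; exact h1.add h2

lemma pwon_envelope (m1 : ℕ) :
    ∀ (S : Finset ℕ) (hS : S.Nonempty), S.card = m1 →
    ∀ (A B C : ℕ → ℝ) (u v : EReal), u ≤ v →
    PWOn (fun x => S.inf' hS fun s => A s + B s * x + C s * x ^ 2) u v (2 * m1 - 1) := by
  classical
  induction m1 with
  | zero =>
    intro S hS hcard
    exact absurd hcard (by simpa using hS.card_pos.ne')
  | succ m ih =>
    intro S hS hcard A B C u v huv
    obtain ⟨s₀, hs₀, hmax⟩ := S.exists_max_image C hS
    rcases Nat.eq_zero_or_pos m with hm | hm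
    · subst hm
      obtain ⟨a, ha⟩ := Finset.card_eq_one.mp hcard
      subst ha
      exact PWOn.single huv (A a) (B a) (C a) (fun x _ _ => by simp)
    · set S' := S.erase s₀ with hS'def
      have hcard' : S'.card = m := by
        rw [hS'def, Finset.card_erase_of_mem hs₀, hcard]
        omega
      have hS' : S'.Nonempty := Finset.card_pos.mp (by omega)
      set g : ℝ → ℝ := fun x => S'.inf' hS' fun s => A s + B s * x + C s * x ^ 2 with hgdef
      have hfg : ∀ x : ℝ, S.inf' hS (fun s => A s + B s * x + C s * x ^ 2)
          = min (A s₀ + B s₀ * x + C s₀ * x ^ 2) (g x) := by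
        intro x
        have hSS : S = insert s₀ S' := (Finset.insert_erase hs₀).symm
        rw [Finset.inf'_congr hS hSS (fun s _ => rfl), Finset.inf'_insert hS']
      have hgP : PWOn g u v (2 * m - 1) := ih S' hS' hcard' A B C u v huv
      set M := 2 * m - 1 with hMdef
      -- the winning region of s₀
      set d : ℝ → ℝ := fun x => (A s₀ + B s₀ * x + C s₀ * x ^ 2) - g x with hddef
      set W : Set ℝ := {x | d x ≤ 0} with hWdef
      have hgc : Continuous g := by
        apply continuous_inf' hS'
        intro s; fun_prop
      have hdc : Continuous d := by
        apply Continuous.sub ?_ hgc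
        fun_prop
      have hdconv : ConvexOn ℝ Set.univ d := by
        have e : d = fun x => S'.sup' hS'
            (fun s => (A s₀ - A s) + (B s₀ - B s) * x + (C s₀ - C s) * x ^ 2) := by
          funext x
          rw [hddef]
          simp only
          rw [hgdef]
          simp only
          rw [sub_inf'_eq_sup' hS']
          exact Finset.sup'_congr hS' rfl (fun s _ => by ring)
        rw [e]
        apply convexOn_sup' hS'
        intro s hs
        exact convexOn_quad _ _ _ (sub_nonneg.mpr (hmax s (Finset.mem_of_mem_erase hs)))
      have hWconv : Convex ℝ W := by
        have := hdconv.convex_le 0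
        simpa [hWdef] using this
      have hWclosed : IsClosed W := isClosed_le hdc continuous_const
      have hnotW : ∀ x : ℝ, x ∉ W → g x < A s₀ + B s₀ * x + C s₀ * x ^ 2 := by
        intro x hx
        have h : 0 < A s₀ + B s₀ * x + C s₀ * x ^ 2 - g x := lt_of_not_ge hx
        linarith
      have hfg_notW : ∀ x : ℝ, x ∉ W →
          S.inf' hS (fun s => A s + B s * x + C s * x ^ 2) = g x := by
        intro x hx
        rw [hfg x]
        exact min_eq_right (le_of_lt (hnotW x hx))
      have hfg_W : ∀ x : ℝ, x ∈ W →
          S.inf' hS (fun s => A s + B s * x + C s * x ^ 2)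
            = A s₀ + B s₀ * x + C s₀ * x ^ 2 := by
        intro x hx
        rw [hfg x]
        refine min_eq_left ?_
        have h : A s₀ + B s₀ * x + C s₀ * x ^ 2 - g x ≤ 0 := hx
        linarith
      by_cases hW : W.Nonempty
      swap
      · -- s₀ never wins: the min is g everywhere
        refine PWOn.pad (N := M) ?_ (by omega)
        apply PWOn.congr (g := g) ?_ hgP
        intro x _ _
        exact hfg_notW x (fun hx => hW ⟨x, hx⟩)
      · -- main case
        set pE : EReal := if BddBelow W then ((sInf W : ℝ) : EReal) else ⊥ with hpEdef
        set rE : EReal := if BddAbove W then ((sSup W : ℝ) : EReal) else ⊤ with hrEdef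
        have hpE_le : ∀ x ∈ W, pE ≤ (x : EReal) := by
          intro x hx
          rw [hpEdef]
          split_ifs with h
          · exact_mod_cast csInf_le h hx
          · exact bot_le
        have hrE_ge : ∀ x ∈ W, (x : EReal) ≤ rE := by
          intro x hx
          rw [hrEdef]
          split_ifs with h
          · exact_mod_cast le_csSup h hx
          · exact le_top
        have hmemW : ∀ x : ℝ, pE ≤ (x : EReal) → (x : EReal) ≤ rE → x ∈ W := by
          intro x hp hr
          obtain ⟨w₁, hw₁, hw₁x⟩ : ∃ w ∈ W, w ≤ x := by
            by_cases h : BddBelow W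
            · refine ⟨sInf W, hWclosed.csInf_mem hW h, ?_⟩
              rw [hpEdef, if_pos h] at hp
              exact_mod_cast hp
            · obtain ⟨y, hy, hyx⟩ := (not_bddBelow_iff.mp h) x
              exact ⟨y, hy, hyx.le⟩
          obtain ⟨w₂, hw₂, hw₂x⟩ : ∃ w ∈ W, x ≤ w := by
            by_cases h : BddAbove W
            · refine ⟨sSup W, hWclosed.csSup_mem hW h, ?_⟩
              rw [hrEdef, if_pos h] at hr
              exact_mod_cast hr
            · obtain ⟨y, hy, hyx⟩ := (not_bddAbove_iff.mp h) x
              exact ⟨y, hy, hyx.le⟩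
          exact hWconv.ordConnected.out hw₁ hw₂ ⟨hw₁x, hw₂x⟩
        have hboundary : ∀ x : ℝ, pE = (x : EReal) → A s₀ + B s₀ * x + C s₀ * x ^ 2 = g x := by
          intro x hx
          have hb : BddBelow W := by
            by_contra h
            rw [hpEdef, if_neg h] at hx
            exact (EReal.coe_ne_bot x) hx.symm
          have hxinf : x = sInf W := by
            rw [hpEdef, if_pos hb] at hx
            exact_mod_cast hx.symm
          have hxW : x ∈ W := hxinf ▸ hWclosed.csInf_mem hW hb
          have hle : d x ≤ 0 := hxW
          have hge : 0 ≤ d x := by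
            have hnb : ∀ z ∈ Set.Iio x, 0 ≤ d z := by
              intro z hz
              have hzW : z ∉ W := by
                intro hzW
                have := hpE_le z hzW
                rw [hx] at this
                have : x ≤ z := by exact_mod_cast this
                exact absurd hz (by simpa using this)
              exact le_of_lt (lt_of_not_ge hzW)
            have htd : Filter.Tendsto d (nhdsWithin x (Set.Iio x)) (nhds (d x)) :=
              (hdc.tendsto x).mono_left nhdsWithin_le_nhds
            exact ge_of_tendsto htd (Filter.eventually_of_mem self_mem_nhdsWithin hnb)
          have h2 : A s₀ + B s₀ * x + C s₀ * x ^ 2 - g x = 0 := le_antisymm hle hge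
          linarith
        set ph : EReal := (pE ⊔ u) ⊓ v with hphdef
        set rh : EReal := (rE ⊔ u) ⊓ v with hrhdef
        have hpErE : pE ≤ rE := by
          obtain ⟨w, hw⟩ := hW
          exact le_trans (hpE_le w hw) (hrE_ge w hw)
        have hph_u : u ≤ ph := le_inf le_sup_right huv
        have hph_v : ph ≤ v := inf_le_right
        have hrh_u : u ≤ rh := le_inf le_sup_right huv
        have hrh_v : rh ≤ v := inf_le_right
        have hphrh : ph ≤ rh := inf_le_inf_right v (sup_le_sup_right hpErE u)
        have hnotW_lt : ∀ x : ℝ, u < (x : EReal) → (x : EReal) < ph → x ∉ W := by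
          intro x hux hxp hxW
          have h1 : pE ⊔ u ≤ (x : EReal) := sup_le (hpE_le x hxW) hux.le
          have : ph ≤ (x : EReal) := le_trans inf_le_left h1
          exact absurd hxp (not_lt.mpr this)
        have hnotW_gt : ∀ x : ℝ, (x : EReal) ≤ v → rh < (x : EReal) → x ∉ W := by
          intro x hxv hrx hxW
          have h1 : (x : EReal) ≤ rE ⊔ u := le_trans (hrE_ge x hxW) le_sup_left
          have : (x : EReal) ≤ rh := le_inf h1 hxv
          exact absurd hrx (not_lt.mpr this)
        -- chain of g
        obtain ⟨a, a0, aM, am, aq⟩ := hgP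
        have hexk : ∃ j, ph ≤ a j := ⟨M, aM ▸ hph_v⟩
        have hexl : ∃ j, rh ≤ a j := ⟨M, aM ▸ hrh_v⟩
        set k := Nat.find hexk with hkdef
        set l := Nat.find hexl with hldef
        have hkspec : ph ≤ a k := Nat.find_spec hexk
        have hlspec : rh ≤ a l := Nat.find_spec hexl
        have hkmin : ∀ j < k, a j < ph := fun j hj => lt_of_not_ge (Nat.find_min hexk hj)
        have hlmin : ∀ j < l, a j < rh := fun j hj => lt_of_not_ge (Nat.find_min hexl hj)
        have hkM : k ≤ M := Nat.find_min' hexk (aM ▸ hph_v)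
        have hlM : l ≤ M := Nat.find_min' hexl (aM ▸ hrh_v)
        have hkl : k ≤ l := Nat.find_min' hexk (le_trans hphrh hlspec)
        set K2 := k + 2 + (M - l) with hK2def
        have hK2M : K2 ≤ M + 2 := by omega
        set e : ℕ → EReal := fun j =>
          if j < k then a j else if j = k then ph
          else if j = k + 1 then rh
          else if j ≤ K2 then a (l + (j - (k + 2))) else v with hedef
        have he1 : ∀ j < k, e j = a j := by
          intro j hj; simp only [hedef]; rw [if_pos hj]
        have he2 : e k = ph := by
          simp only [hedef]; rw [if_neg (lt_irrefl k)]; exact if_pos trivial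
        have he3 : e (k + 1) = rh := by
          simp only [hedef]
          rw [if_neg (show ¬ (k + 1 < k) by omega), if_neg (show ¬ (k + 1 = k) by omega)]
          exact if_pos trivial
        have he4 : ∀ j, k + 2 ≤ j → j ≤ K2 → e j = a (l + (j - (k + 2))) := by
          intro j h1 h2
          simp only [hedef]
          rw [if_neg (show ¬ (j < k) by omega), if_neg (show ¬ (j = k) by omega),
            if_neg (show ¬ (j = k + 1) by omega)]
          exact if_pos h2
        have he0 : e 0 = u := by
          rcases Nat.eq_zero_or_pos k with h | h
          · have h1 : ph ≤ a 0 := h ▸ hkspec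
            rw [a0] at h1
            have : ph = u := le_antisymm h1 hph_u
            rw [← h, he2, this]
          · rw [he1 0 h, a0]
        have heK2 : e K2 = v := by
          rw [he4 K2 (by omega) le_rfl, show l + (K2 - (k + 2)) = M by omega, aM]
        refine PWOn.pad (N := K2) ?_ (by omega)
        refine ⟨e, he0, heK2, ?_, ?_⟩
        · -- monotone
          intro j hj
          rcases Nat.lt_or_ge (j + 1) k with hc1 | hc1
          · rw [he1 j (by omega), he1 (j + 1) hc1]
            exact am j (by omega)
          rcases Nat.eq_or_lt_of_le hc1 with hc2 | hc2
          · rw [he1 j (by omega), ← hc2, he2]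
            exact (hkmin j (by omega)).le
          rcases Nat.eq_or_lt_of_le (Nat.succ_le_of_lt hc2) with hc3 | hc3
          · -- j = k
            have hjk : j = k := by omega
            rw [hjk, he2, he3]
            exact hphrh
          rcases Nat.eq_or_lt_of_le (Nat.succ_le_of_lt hc3) with hc4 | hc4
          · -- j = k + 1
            have hjk : j = k + 1 := by omega
            rw [hjk, he3, he4 (k + 2) le_rfl (by omega), show l + (k + 2 - (k + 2)) = l by omega]
            exact hlspec
          · -- j ≥ k + 2
            rw [he4 j (by omega) (by omega), he4 (j + 1) (by omega) (by omega),
              show l + (j + 1 - (k + 2)) = (l + (j - (k + 2))) + 1 by omega]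
            exact am _ (by omega)
        · -- pieces
          intro j hj
          have huej : ∀ i ≤ K2, u ≤ e i := by
            intro i hi
            rcases Nat.lt_or_ge i k with h | h
            · rw [he1 i h, ← a0]; exact chain_mono am 0 i (Nat.zero_le _) (by omega)
            rcases Nat.eq_or_lt_of_le h with h2 | h2
            · rw [← h2, he2]; exact hph_u
            rcases Nat.eq_or_lt_of_le (Nat.succ_le_of_lt h2) with h3 | h3
            · rw [← h3, he3]; exact hrh_u
            · rw [he4 i (by omega) hi]
              exact le_trans hrh_u (le_trans hlspec (chain_mono am l _ (by omega) (by omega)))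
          have hvej : ∀ i ≤ K2, e i ≤ v := by
            intro i hi
            rcases Nat.lt_or_ge i k with h | h
            · rw [he1 i h, ← aM]; exact chain_mono am i M (by omega) le_rfl
            rcases Nat.eq_or_lt_of_le h with h2 | h2
            · rw [← h2, he2]; exact hph_v
            rcases Nat.eq_or_lt_of_le (Nat.succ_le_of_lt h2) with h3 | h3
            · rw [← h3, he3]; exact hrh_v
            · rw [he4 i (by omega) hi, ← aM]
              exact chain_mono am _ M (by omega) le_rfl
          rcases Nat.lt_or_ge (j + 1) k with hc1 | hc1
          · -- far left : f = g on (a j, a (j+1)]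
            obtain ⟨c₀, c₁, c₂, hc⟩ := aq j (by omega)
            refine ⟨c₀, c₁, c₂, fun x hx1 hx2 => ?_⟩
            rw [he1 j (by omega)] at hx1
            rw [he1 (j + 1) hc1] at hx2
            have hxu : u < (x : EReal) := lt_of_le_of_lt (a0 ▸ chain_mono am 0 j (Nat.zero_le _) (by omega)) hx1
            have hxph : (x : EReal) < ph :=
              lt_of_le_of_lt (le_trans hx2 (chain_mono am (j + 1) (k - 1) (by omega) (by omega)))
                (hkmin (k - 1) (by omega))
            show S.inf' hS (fun s => A s + B s * x + C s * x ^ 2) = _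
            rw [hfg_notW x (hnotW_lt x hxu hxph)]
            exact hc x hx1 hx2
          rcases Nat.eq_or_lt_of_le hc1 with hc2 | hc2
          · -- j + 1 = k : the piece (a (k-1), ph]
            obtain ⟨c₀, c₁, c₂, hc⟩ := aq j (by omega)
            refine ⟨c₀, c₁, c₂, fun x hx1 hx2 => ?_⟩
            rw [he1 j (by omega)] at hx1
            rw [← hc2, he2] at hx2
            have hxu : u < (x : EReal) := lt_of_le_of_lt (a0 ▸ chain_mono am 0 j (Nat.zero_le _) (by omega)) hx1
            have hxa : (x : EReal) ≤ a (j + 1) := le_trans hx2 (hc2 ▸ hkspec)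
            have hfgx : S.inf' hS (fun s => A s + B s * x + C s * x ^ 2) = g x := by
              rcases lt_or_eq_of_le hx2 with h | h
              · exact hfg_notW x (hnotW_lt x hxu h)
              · -- x = ph
                by_cases hxpE : (x : EReal) < pE
                · refine hfg_notW x (fun hxW => ?_)
                  exact absurd (hpE_le x hxW) (not_le.mpr hxpE)
                · have h1 : (x : EReal) ≤ pE ⊔ u := by rw [h]; exact inf_le_left
                  have h2 : (x : EReal) ≤ pE := by
                    rcases le_sup_iff.mp h1 with h3 | h3
                    · exact h3
                    · exact absurd h3 (not_le.mpr hxu)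
                  have h3 : pE = (x : EReal) := le_antisymm (not_lt.mp hxpE) h2
                  have h4 := hboundary x h3
                  have hxW : x ∈ W := hmemW x h3.le (le_trans h2 hpErE)
                  rw [hfg_W x hxW, h4]
            show S.inf' hS (fun s => A s + B s * x + C s * x ^ 2) = _
            rw [hfgx]
            exact hc x hx1 hxa
          rcases Nat.eq_or_lt_of_le (Nat.succ_le_of_lt hc2) with hc3 | hc3
          · -- j = k : the piece (ph, rh] where s₀ wins
            have hjk : j = k := by omega
            refine ⟨A s₀, B s₀, C s₀, fun x hx1 hx2 => ?_⟩
            rw [hjk, he2] at hx1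
            rw [hjk, he3] at hx2
            have hxv : (x : EReal) ≤ v := le_trans hx2 hrh_v
            have hpEx : pE ≤ (x : EReal) := by
              rcases inf_lt_iff.mp hx1 with h | h
              · exact le_trans le_sup_left h.le
              · exact absurd hxv (not_le.mpr h)
            have hxu : u < (x : EReal) := lt_of_le_of_lt hph_u hx1
            have hxrE : (x : EReal) ≤ rE := by
              have h1 : (x : EReal) ≤ rE ⊔ u := le_trans hx2 inf_le_left
              rcases le_sup_iff.mp h1 with h3 | h3
              · exact h3
              · exact absurd h3 (not_le.mpr hxu)
            show S.inf' hS (fun s => A s + B s * x + C s * x ^ 2) = _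
            exact hfg_W x (hmemW x hpEx hxrE)
          rcases Nat.eq_or_lt_of_le (Nat.succ_le_of_lt hc3) with hc4 | hc4
          · -- j = k + 1 : the piece (rh, a l]
            have hjk : j = k + 1 := by omega
            rcases Nat.eq_zero_or_pos l with hl0 | hl0
            · refine ⟨0, 0, 0, fun x hx1 hx2 => ?_⟩
              rw [hjk, he3] at hx1
              rw [hjk, he4 (k + 2) le_rfl (by omega),
                show l + (k + 2 - (k + 2)) = l by omega, hl0, a0] at hx2
              exact absurd (lt_of_le_of_lt (le_trans hx2 hrh_u) hx1) (lt_irrefl _)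
            · obtain ⟨c₀, c₁, c₂, hc⟩ := aq (l - 1) (by omega)
              refine ⟨c₀, c₁, c₂, fun x hx1 hx2 => ?_⟩
              rw [hjk, he3] at hx1
              rw [hjk, he4 (k + 2) le_rfl (by omega),
                show l + (k + 2 - (k + 2)) = l by omega] at hx2
              have hxv : (x : EReal) ≤ v := le_trans hx2 (aM ▸ chain_mono am l M hlM le_rfl)
              show S.inf' hS (fun s => A s + B s * x + C s * x ^ 2) = _
              rw [hfg_notW x (hnotW_gt x hxv hx1)]
              exact hc x (lt_trans (hlmin (l - 1) (by omega)) hx1)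
                (by rw [show l - 1 + 1 = l by omega]; exact hx2)
          · -- j ≥ k + 2
            obtain ⟨c₀, c₁, c₂, hc⟩ := aq (l + (j - (k + 2))) (by omega)
            refine ⟨c₀, c₁, c₂, fun x hx1 hx2 => ?_⟩
            rw [he4 j (by omega) (by omega)] at hx1
            rw [he4 (j + 1) (by omega) (by omega),
              show l + (j + 1 - (k + 2)) = (l + (j - (k + 2))) + 1 by omega] at hx2
            have hxv : (x : EReal) ≤ v :=
              le_trans hx2 (aM ▸ chain_mono am _ M (by omega) le_rfl)
            have hrx : rh < (x : EReal) :=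
              lt_of_le_of_lt (le_trans hlspec (chain_mono am l _ (by omega) (by omega))) hx1
            show S.inf' hS (fun s => A s + B s * x + C s * x ^ 2) = _
            rw [hfg_notW x (hnotW_gt x hxv hrx)]
            exact hc x hx1 hx2

lemma nat_chain_mono {a : ℕ → ℕ} {k : ℕ} (h : ∀ i < k, a i < a (i + 1)) :
    ∀ i j, i ≤ j → j ≤ k → a i ≤ a j := by
  intro i j hij hjk
  induction j with
  | zero => simp_all
  | succ m ih =>
    rcases Nat.lt_or_ge i (m + 1) with hi | hi
    · exact le_trans (ih (by omega) (by omega)) (h m (by omega)).le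
    · have : i = m + 1 := by omega
      simp [this]

lemma condCost_repr (γ : ℝ → ℝ → ℝ) (y : ℕ → ℝ) (β : ℝ) (t : ℕ) (ht : 1 ≤ t) :
    ∃ (S : Finset ℕ) (G : ℕ → ℝ) (hS : S.Nonempty), (∀ s ∈ S, s < t) ∧
      ∀ θ : ℝ, condCost γ y β t θ =
        S.inf' hS (fun s => G s + (∑ j ∈ Finset.Ioc s t, γ (y j) θ) + β) := by
  classical
  have htpos : 0 < t := ht
  set w' : (Fin t → Fin t) → ℕ → ℕ :=
    fun w i => if h : i < t then (w ⟨i, h⟩ : ℕ) else 0 with hw'def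
  set valid : (Fin t → Fin t) × Fin t → Prop :=
    fun p => w' p.1 0 = 0 ∧ ∀ i < (p.2 : ℕ), w' p.1 i < w' p.1 (i + 1) with hvaliddef
  set D : Finset ((Fin t → Fin t) × Fin t) := Finset.univ.filter valid with hDdef
  set Aval : (Fin t → Fin t) × Fin t → ℝ :=
    fun p => ∑ i ∈ Finset.range (p.2 : ℕ), (segCost γ y (w' p.1 i) (w' p.1 (i + 1)) + β)
    with hAdef
  set lastp : (Fin t → Fin t) × Fin t → ℕ := fun p => w' p.1 (p.2 : ℕ) with hlastdef
  have hw'lt : ∀ w i, w' w i < t := by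
    intro w i
    by_cases h : i < t
    · simp only [hw'def]; rw [dif_pos h]; exact (w ⟨i, h⟩).isLt
    · simp only [hw'def]; rw [dif_neg h]; exact htpos
  have hDne : D.Nonempty := by
    refine ⟨(fun _ => ⟨0, htpos⟩, ⟨0, htpos⟩), Finset.mem_filter.mpr ⟨Finset.mem_univ _, ?_, ?_⟩⟩
    · simp only [hw'def]; rw [dif_pos htpos]
    · intro i hi; exact absurd hi (by simp)
  have hsetimg : ∀ θ : ℝ,
      {c : ℝ | ∃ (k : ℕ) (τ : ℕ → ℕ), LastSeg t k τ ∧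
        c = (∑ i ∈ Finset.range k, (segCost γ y (τ i) (τ (i + 1)) + β)) +
            (∑ j ∈ Finset.Ioc (τ k) t, γ (y j) θ) + β}
      = ↑(D.image (fun p => Aval p + (∑ j ∈ Finset.Ioc (lastp p) t, γ (y j) θ) + β)) := by
    intro θ
    ext c
    simp only [Set.mem_setOf_eq, Finset.coe_image, Set.mem_image, Finset.mem_coe]
    constructor
    · rintro ⟨k, τ, ⟨hτ0, hτk, hτinc⟩, hc⟩
      have hmono : ∀ i j, i ≤ j → j ≤ k → τ i ≤ τ j := nat_chain_mono hτinc
      have hge : ∀ i ≤ k, i ≤ τ i := by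
        intro i hi
        induction i with
        | zero => omega
        | succ m ihm => exact lt_of_le_of_lt (ihm (by omega)) (hτinc m (by omega))
      have hkt : k < t := lt_of_le_of_lt (hge k le_rfl) hτk
      have hτlt : ∀ i ≤ k, τ i < t := fun i hi => lt_of_le_of_lt (hmono i k hi le_rfl) hτk
      refine ⟨(fun i => ⟨τ (min (i : ℕ) k), hτlt _ (min_le_right _ _)⟩, ⟨k, hkt⟩), ?_, ?_⟩
      · have hw : ∀ i ≤ k, w' (fun i => ⟨τ (min (i : ℕ) k), hτlt _ (min_le_right _ _)⟩) i = τ i := by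
          intro i hi
          have hit : i < t := lt_of_le_of_lt hi hkt
          simp only [hw'def]
          rw [dif_pos hit]
          simp [min_eq_left hi]
        refine Finset.mem_filter.mpr ⟨Finset.mem_univ _, ?_, ?_⟩
        · rw [hw 0 (Nat.zero_le _)]; exact hτ0
        · intro i hi
          simp only at hi
          rw [hw i (by omega), hw (i + 1) (by omega)]
          exact hτinc i hi
      · have hw : ∀ i ≤ k, w' (fun i => ⟨τ (min (i : ℕ) k), hτlt _ (min_le_right _ _)⟩) i = τ i := by
          intro i hi
          have hit : i < t := lt_of_le_of_lt hi hkt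
          simp only [hw'def]
          rw [dif_pos hit]
          simp [min_eq_left hi]
        rw [hc]
        simp only [hAdef, hlastdef]
        congr 1
        · congr 1
          · refine Finset.sum_congr rfl (fun i hi => ?_)
            have hik : i < k := Finset.mem_range.mp hi
            rw [hw i (by omega), hw (i + 1) (by omega)]
          · rw [hw k le_rfl]
    · rintro ⟨p, hpD, hpc⟩
      obtain ⟨hpv⟩ := Finset.mem_filter.mp hpD |>.2
      have hval := Finset.mem_filter.mp hpD |>.2
      set k := (p.2 : ℕ) with hkdef
      refine ⟨k, fun i => w' p.1 (min i k), ⟨?_, ?_, ?_⟩, ?_⟩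
      · simpa using hval.1
      · simpa using hw'lt p.1 k
      · intro i hi
        simp only [min_eq_left (by omega : i ≤ k), min_eq_left (by omega : i + 1 ≤ k)]
        exact hval.2 i hi
      · rw [← hpc]
        simp only [hAdef, hlastdef]
        congr 1
        · congr 1
          · refine Finset.sum_congr rfl (fun i hi => ?_)
            have hik : i < k := Finset.mem_range.mp hi
            simp only [min_eq_left (by omega : i ≤ k), min_eq_left (by omega : i + 1 ≤ k)]
          · simp only [min_self]; rfl
  -- condCost as a finite min over D
  have hmin : ∀ θ : ℝ, condCost γ y β t θ =
      D.inf' hDne (fun p => Aval p + (∑ j ∈ Finset.Ioc (lastp p) t, γ (y j) θ) + β) := by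
    intro θ
    have himg : (D.image (fun p => Aval p + (∑ j ∈ Finset.Ioc (lastp p) t, γ (y j) θ) + β)).Nonempty :=
      hDne.image _
    rw [condCost, hsetimg θ, himg.csInf_eq_min']
    apply le_antisymm
    · apply Finset.le_inf' hDne
      intro p hpD
      exact Finset.min'_le _ _ (Finset.mem_image_of_mem _ hpD)
    · obtain ⟨p, hpD, hpe⟩ := Finset.mem_image.mp (Finset.min'_mem _ himg)
      rw [← hpe]
      exact Finset.inf'_le _ hpD
  -- group by last changepoint
  set S : Finset ℕ := D.image lastp with hSdef
  have hSne : S.Nonempty := hDne.image _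
  have hSlt : ∀ s ∈ S, s < t := by
    intro s hs
    obtain ⟨p, _, hp⟩ := Finset.mem_image.mp hs
    rw [← hp]
    exact hw'lt p.1 _
  set G : ℕ → ℝ := fun s => sInf (Aval '' {p | p ∈ D ∧ lastp p = s}) with hGdef
  have hGfin : ∀ s : ℕ, (Aval '' {p | p ∈ D ∧ lastp p = s}).Finite :=
    fun s => (D.finite_toSet.subset (fun p hp => hp.1)).image Aval
  have hGle : ∀ p ∈ D, G (lastp p) ≤ Aval p := by
    intro p hpD
    exact csInf_le (hGfin (lastp p)).bddBelow ⟨p, ⟨hpD, rfl⟩, rfl⟩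
  have hGmem : ∀ s ∈ S, ∃ p ∈ D, lastp p = s ∧ G s = Aval p := by
    intro s hsS
    obtain ⟨p, hpD, hps⟩ := Finset.mem_image.mp hsS
    have hne : (Aval '' {p | p ∈ D ∧ lastp p = s}).Nonempty := ⟨Aval p, ⟨p, ⟨hpD, hps⟩, rfl⟩⟩
    obtain ⟨q, ⟨hqD, hqs⟩, hqe⟩ := hne.csInf_mem (hGfin s)
    exact ⟨q, hqD, hqs, hqe.symm⟩
  refine ⟨S, G, hSne, hSlt, fun θ => ?_⟩
  rw [hmin θ]
  apply le_antisymm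
  · apply Finset.le_inf' hSne
    intro s hsS
    obtain ⟨p₀, hp₀D, hp₀s, hp₀e⟩ := hGmem s hsS
    rw [hp₀e]
    have := Finset.inf'_le (fun p => Aval p + (∑ j ∈ Finset.Ioc (lastp p) t, γ (y j) θ) + β) hp₀D
    rw [hp₀s] at this
    exact this
  · apply Finset.le_inf' hDne
    intro p hpD
    have hsS : lastp p ∈ S := Finset.mem_image_of_mem lastp hpD
    refine le_trans (Finset.inf'_le _ hsS) ?_
    have h9 := hGle p hpD
    have : G (lastp p) + (∑ j ∈ Finset.Ioc (lastp p) t, γ (y j) θ) + β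
        ≤ Aval p + (∑ j ∈ Finset.Ioc (lastp p) t, γ (y j) θ) + β := by linarith
    exact this

/-- For the biweight loss, `θ ↦ Q_t(θ)` is piecewise quadratic on at most
`(2t+1)(2t−1)` intervals; in particular `O(t²)` intervals suffice. -/
theorem condCost_piecewise_quad_biweight
    (K : ℝ) (hK : 0 < K)
    (n : ℕ) (y : ℕ → ℝ) (β : ℝ) (hβ : 0 < β)
    (t : ℕ) (ht : 1 ≤ t) (htn : t ≤ n) :
    IsPiecewiseQuad
      (fun θ => condCost (fun a θ' => min ((a - θ') ^ 2) (K ^ 2)) y β t θ)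
      ((2 * t + 1) * (2 * t - 1)) := by
  classical
  obtain ⟨S, G, hS, hSlt, hrepr⟩ :=
    condCost_repr (fun a θ' => min ((a - θ') ^ 2) (K ^ 2)) y β t ht
  have hScard : S.card ≤ t := by
    have : S ⊆ Finset.range t := fun s hs => Finset.mem_range.mpr (hSlt s hs)
    simpa using Finset.card_le_card this
  -- breakpoints
  set Bset : Finset ℝ := ((Finset.Ioc 0 t).image (fun j => y j - K)) ∪
    ((Finset.Ioc 0 t).image (fun j => y j + K)) with hBdef
  set L : List ℝ := Bset.sort (· ≤ ·) with hLdef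
  set b := L.length with hbdef
  have hble : b ≤ 2 * t := by
    have h1 : L.length = Bset.card := Finset.length_sort _
    have h2 : Bset.card ≤ t + t := by
      refine le_trans (Finset.card_union_le _ _) ?_
      have h3 : ((Finset.Ioc 0 t).image (fun j => y j - K)).card ≤ t := by
        refine le_trans Finset.card_image_le ?_
        simp
      have h4 : ((Finset.Ioc 0 t).image (fun j => y j + K)).card ≤ t := by
        refine le_trans Finset.card_image_le ?_
        simp
      omega
    omega
  have hsorted : L.Pairwise (· ≤ ·) := Finset.pairwise_sort _ _
  have hgetmono : ∀ (i j : ℕ) (hi : i < b) (hj : j < b), i ≤ j →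
      L.get ⟨i, hi⟩ ≤ L.get ⟨j, hj⟩ :=
    fun i j hi hj hij => hsorted.rel_get_of_le (Fin.mk_le_mk.mpr hij)
  set c : ℕ → EReal := fun i =>
    if i = 0 then ⊥ else if h : i - 1 < b then ((L.get ⟨i - 1, h⟩ : ℝ) : EReal) else ⊤
    with hcdef
  have hc0 : c 0 = ⊥ := by simp only [hcdef]; exact if_pos trivial
  have hctop : c (b + 1) = ⊤ := by
    simp only [hcdef]
    rw [if_neg (by omega : ¬ b + 1 = 0), dif_neg (by omega : ¬ b + 1 - 1 < b)]
  have hcmono : ∀ i ≤ b, c i ≤ c (i + 1) := by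
    intro i hi
    rcases Nat.eq_zero_or_pos i with h0 | h0
    · rw [h0, hc0]; exact bot_le
    · have hi1 : i - 1 < b := by omega
      rcases Nat.lt_or_ge i b with h1 | h1
      · have e1 : c i = ((L.get ⟨i - 1, hi1⟩ : ℝ) : EReal) := by
          simp only [hcdef]; rw [if_neg (by omega), dif_pos hi1]
        have e2 : c (i + 1) = ((L.get ⟨i, h1⟩ : ℝ) : EReal) := by
          simp only [hcdef]; rw [if_neg (by omega), dif_pos (by omega : i + 1 - 1 < b)]
          simp only [Nat.add_sub_cancel]
        rw [e1, e2]
        exact_mod_cast hgetmono (i - 1) i hi1 h1 (by omega)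
      · have : i = b := by omega
        have e2 : c (i + 1) = ⊤ := by
          simp only [hcdef]; rw [if_neg (by omega), dif_neg (by omega : ¬ i + 1 - 1 < b)]
        rw [e2]; exact le_top
  have hnoin : ∀ x ∈ Bset, ∀ i : ℕ, ¬(c i < (x : EReal) ∧ (x : EReal) < c (i + 1)) := by
    intro x hx i ⟨h1, h2⟩
    have hxL : x ∈ L := (Finset.mem_sort _).mpr hx
    obtain ⟨⟨m, hm⟩, hg⟩ := List.get_of_mem hxL
    rcases Nat.eq_zero_or_pos i with h0 | h0
    · have e2 : c 1 = ((L.get ⟨0, by omega⟩ : ℝ) : EReal) := by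
        simp only [hcdef]; rw [if_neg (by omega), dif_pos (by omega : (1:ℕ) - 1 < b)]
      rw [h0, e2] at h2
      have : x < L.get ⟨0, by omega⟩ := by exact_mod_cast h2
      exact absurd this (not_lt.mpr (hg ▸ hgetmono 0 m (by omega) hm (by omega)))
    · by_cases hib : i - 1 < b
      · have e1 : c i = ((L.get ⟨i - 1, hib⟩ : ℝ) : EReal) := by
          simp only [hcdef]; rw [if_neg (by omega), dif_pos hib]
        rw [e1] at h1
        have hgi : L.get ⟨i - 1, hib⟩ < x := by exact_mod_cast h1
        have hmi : i ≤ m := by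
          by_contra hc'
          push_neg at hc'
          exact absurd hgi (not_lt.mpr (hg ▸ hgetmono m (i - 1) hm hib (by omega)))
        rcases Nat.lt_or_ge i b with h3 | h3
        · have e2 : c (i + 1) = ((L.get ⟨i, h3⟩ : ℝ) : EReal) := by
            simp only [hcdef]; rw [if_neg (by omega), dif_pos (by omega : i + 1 - 1 < b)]
            simp only [Nat.add_sub_cancel]
          rw [e2] at h2
          have : x < L.get ⟨i, h3⟩ := by exact_mod_cast h2
          exact absurd this (not_lt.mpr (hg ▸ hgetmono i m h3 hm hmi))
        · omega
      · have e1 : c i = ⊤ := by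
          simp only [hcdef]; rw [if_neg (by omega), dif_neg hib]
        rw [e1] at h1
        exact absurd h1 (by simp)
  -- per-cell piecewise quadratic
  have hcell : ∀ i ≤ b, PWOn
      (fun θ => condCost (fun a θ' => min ((a - θ') ^ 2) (K ^ 2)) y β t θ)
      (c i) (c (i + 1)) (2 * t - 1) := by
    intro i hi
    set cond : ℕ → Prop := fun j =>
      (c (i + 1) ≤ ((y j - K : ℝ) : EReal)) ∨ (((y j + K : ℝ) : EReal) ≤ c i) with hconddef
    set q0 : ℕ → ℝ := fun j => if cond j then K ^ 2 else y j ^ 2 with hq0def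
    set q1 : ℕ → ℝ := fun j => if cond j then 0 else -(2 * y j) with hq1def
    set q2 : ℕ → ℝ := fun j => if cond j then 0 else 1 with hq2def
    have hbranch : ∀ j ∈ Finset.Ioc 0 t, ∀ θ : ℝ, c i < (θ : EReal) → (θ : EReal) ≤ c (i + 1) →
        min ((y j - θ) ^ 2) (K ^ 2) = q0 j + q1 j * θ + q2 j * θ ^ 2 := by
      intro j hj θ hθ1 hθ2
      by_cases hcj : cond j
      · have e : q0 j + q1 j * θ + q2 j * θ ^ 2 = K ^ 2 := by
          simp only [hq0def, hq1def, hq2def, if_pos hcj]; ring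
        rw [e]
        rcases hcj with h | h
        · have hθr : (θ : EReal) ≤ ((y j - K : ℝ) : EReal) := le_trans hθ2 h
          have hθ' : θ ≤ y j - K := by exact_mod_cast hθr
          exact min_eq_right (by nlinarith [hK.le])
        · have hθr : ((y j + K : ℝ) : EReal) < (θ : EReal) := lt_of_le_of_lt h hθ1
          have hθ' : y j + K < θ := by exact_mod_cast hθr
          exact min_eq_right (by nlinarith [hK.le])
      · have hc1 : ((y j - K : ℝ) : EReal) < c (i + 1) := not_le.mp (fun h => hcj (Or.inl h))
        have hc2 : c i < ((y j + K : ℝ) : EReal) := not_le.mp (fun h => hcj (Or.inr h))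
        have hm1 : (y j - K : ℝ) ∈ Bset := by
          rw [hBdef]
          exact Finset.mem_union_left _ (Finset.mem_image_of_mem _ hj)
        have hm2 : (y j + K : ℝ) ∈ Bset := by
          rw [hBdef]
          exact Finset.mem_union_right _ (Finset.mem_image_of_mem _ hj)
        have hle1 : ((y j - K : ℝ) : EReal) ≤ c i := by
          by_contra h
          exact hnoin _ hm1 i ⟨not_le.mp h, hc1⟩
        have hle2 : c (i + 1) ≤ ((y j + K : ℝ) : EReal) := by
          by_contra h
          exact hnoin _ hm2 i ⟨hc2, not_le.mp h⟩
        have hθ1' : (y j - K : ℝ) < θ := by exact_mod_cast lt_of_le_of_lt hle1 hθ1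
        have hθ2' : θ ≤ y j + K := by exact_mod_cast le_trans hθ2 hle2
        have e : q0 j + q1 j * θ + q2 j * θ ^ 2 = (y j - θ) ^ 2 := by
          simp only [hq0def, hq1def, hq2def, if_neg hcj]; ring
        rw [e]
        exact min_eq_left (by nlinarith)
    set A' : ℕ → ℝ := fun s => G s + β + ∑ j ∈ Finset.Ioc s t, q0 j with hA'def
    set B' : ℕ → ℝ := fun s => ∑ j ∈ Finset.Ioc s t, q1 j with hB'def
    set C' : ℕ → ℝ := fun s => ∑ j ∈ Finset.Ioc s t, q2 j with hC'def
    have henv := pwon_envelope S.card S hS rfl A' B' C' (c i) (c (i + 1)) (hcmono i hi)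
    refine PWOn.congr ?_ (henv.pad (by omega : 2 * S.card - 1 ≤ 2 * t - 1))
    intro x hx1 hx2
    show condCost (fun a θ' => min ((a - θ') ^ 2) (K ^ 2)) y β t x = _
    rw [hrepr x]
    refine Finset.inf'_congr hS rfl (fun s hsS => ?_)
    have hsum : (∑ j ∈ Finset.Ioc s t, min ((y j - x) ^ 2) (K ^ 2))
        = (∑ j ∈ Finset.Ioc s t, q0 j) + (∑ j ∈ Finset.Ioc s t, q1 j) * x
          + (∑ j ∈ Finset.Ioc s t, q2 j) * x ^ 2 := by
      have h1 : (∑ j ∈ Finset.Ioc s t, min ((y j - x) ^ 2) (K ^ 2))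
          = ∑ j ∈ Finset.Ioc s t, (q0 j + q1 j * x + q2 j * x ^ 2) := by
        refine Finset.sum_congr rfl (fun j hj => ?_)
        have hj' : j ∈ Finset.Ioc 0 t := by
          have := Finset.mem_Ioc.mp hj
          exact Finset.mem_Ioc.mpr ⟨by omega, this.2⟩
        exact hbranch j hj' x hx1 hx2
      rw [h1, Finset.sum_add_distrib, Finset.sum_add_distrib, ← Finset.sum_mul, ← Finset.sum_mul]
    show G s + (∑ j ∈ Finset.Ioc s t, min ((y j - x) ^ 2) (K ^ 2)) + β = _
    rw [hsum]
    simp only [hA'def, hB'def, hC'def]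
    ring
  -- glue the cells together
  have hglue : ∀ i, i ≤ b + 1 → PWOn
      (fun θ => condCost (fun a θ' => min ((a - θ') ^ 2) (K ^ 2)) y β t θ)
      ⊥ (c i) (i * (2 * t - 1)) := by
    intro i
    induction i with
    | zero =>
      intro _
      exact ⟨fun _ => ⊥, rfl, hc0.symm, fun j hj => absurd hj (by omega),
        fun j hj => absurd hj (by omega)⟩
    | succ i ihi =>
      intro hi
      have h1 := ihi (by omega)
      have h2 := hcell i (by omega)
      have h3 := h1.glue h2
      rw [show i * (2 * t - 1) + (2 * t - 1) = (i + 1) * (2 * t - 1) by ring] at h3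
      exact h3
  have hfinal := hglue (b + 1) le_rfl
  rw [hctop] at hfinal
  refine hfinal.isPiecewiseQuad ?_
  have hb1 : b + 1 ≤ 2 * t + 1 := by omega
  exact Nat.mul_le_mul_right _ hb1
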